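/- Let n be a positive integer and t = ⌈log₂(n+1)⌉, and for 0 ≤ j ≤ t−1 define the positions i_j = (−2^j) mod (n+1). Then for every a ∈ {0, 1, …, n} there exist binary coefficients b_0, …, b_{t−1} ∈ {0,1} such that Σ_{j=0}^{t−1} b_j · i_j ≡ a (mod n+1). In other words, the set of positions {i_0, …, i_{t−1}} can produce all syndromes. -/
import Mathlib

lemma sum_bits (t : ℕ) : ∀ m : ℕ, m < 2 ^ t →
    ∑ j ∈ Finset.range t, (m / 2 ^ j % 2) * 2 ^ j = m := by
  induction t with
  | zero => intro m hm; simp at hm ⊢; omega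
  | succ t ih =>
    intro m hm
    rw [Finset.sum_range_succ']
    have h2 : m / 2 < 2 ^ t := by
      rw [pow_succ] at hm; omega
    have iH := ih (m / 2) h2
    have hshift : ∀ j : ℕ, m / 2 ^ (j + 1) % 2 * 2 ^ (j + 1)
        = 2 * ((m / 2) / 2 ^ j % 2 * 2 ^ j) := by
      intro j
      rw [pow_succ', Nat.div_div_eq_div_mul, Nat.mul_comm 2 (2 ^ j)]
      ring
    simp only [hshift, ← Finset.mul_sum, iH, pow_zero, mul_one]
    omega

theorem vt_negative_dyadic_positions_produce_all_syndromes
    (n : ℕ) (hn : 1 ≤ n) (t : ℕ) (ht : t = Nat.clog 2 (n + 1))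
    (a : ℕ) (ha : a ≤ n) :
    ∃ b : Fin t → Fin 2,
      (∑ j : Fin t, ((b j : ℕ) : ℤ) * ((-(2 ^ (j : ℕ) : ℤ)) % ((n : ℤ) + 1)))
        % ((n : ℤ) + 1) = a := by
  set M : ℤ := (n : ℤ) + 1 with hM
  set m : ℕ := (n + 1 - a) % (n + 1) with hm
  have hmn : m < n + 1 := Nat.mod_lt _ (by omega)
  have hle : n + 1 ≤ 2 ^ t := by
    rw [ht]; exact Nat.le_pow_clog (by norm_num) _
  have hmt : m < 2 ^ t := lt_of_lt_of_le hmn hle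
  refine ⟨fun j => ⟨m / 2 ^ (j : ℕ) % 2, Nat.mod_lt _ (by norm_num)⟩, ?_⟩
  have hsum : ∑ j : Fin t, (m / 2 ^ (j : ℕ) % 2) * 2 ^ (j : ℕ) = m := by
    rw [Fin.sum_univ_eq_sum_range (fun j => m / 2 ^ j % 2 * 2 ^ j) t]
    exact sum_bits t m hmt
  have hdvd : (n + 1) ∣ (m + a) := by
    rcases Nat.eq_zero_or_pos a with h | h
    · subst h; simp [hm]
    · have h1 : m = n + 1 - a := Nat.mod_eq_of_lt (by omega)
      have h2 : m + a = n + 1 := by omega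
      rw [h2]
  have hcong : (∑ j : Fin t, ((m / 2 ^ (j : ℕ) % 2 : ℕ) : ℤ) * ((-(2 ^ (j : ℕ) : ℤ)) % M)) % M
      = (∑ j : Fin t, ((m / 2 ^ (j : ℕ) % 2 : ℕ) : ℤ) * (-(2 ^ (j : ℕ) : ℤ))) % M := by
    rw [Finset.sum_int_mod, Finset.sum_int_mod Finset.univ M
      (fun j : Fin t => ((m / 2 ^ (j : ℕ) % 2 : ℕ) : ℤ) * (-(2 ^ (j : ℕ) : ℤ)))]
    congr 1
    refine Finset.sum_congr rfl fun j _ => ?_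
    conv_lhs => rw [Int.mul_emod, Int.emod_emod_of_dvd _ dvd_rfl, ← Int.mul_emod]
  have hc := congrArg (Nat.cast : ℕ → ℤ) hsum
  push_cast at hc
  have hval : (∑ j : Fin t, ((m / 2 ^ (j : ℕ) % 2 : ℕ) : ℤ) * (-(2 ^ (j : ℕ) : ℤ))) = -(m : ℤ) := by
    push_cast
    have hneg : ∑ j : Fin t, ((m : ℤ) / 2 ^ (j : ℕ) % 2 * (-(2 ^ (j : ℕ))))
        = -∑ j : Fin t, ((m : ℤ) / 2 ^ (j : ℕ) % 2 * 2 ^ (j : ℕ)) := by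
      rw [← Finset.sum_neg_distrib]
      exact Finset.sum_congr rfl fun j _ => by ring
    rw [hneg, hc]
  have hfin : (-(m : ℤ)) % M = (a : ℤ) % M := by
    have hdc : M ∣ ((a : ℤ) - -(m : ℤ)) := by
      have : ((n : ℤ) + 1) ∣ ((m : ℤ) + a) := by exact_mod_cast hdvd
      simpa [hM, sub_neg_eq_add, add_comm] using this
    exact (Int.modEq_iff_dvd.mpr hdc)
  have haM : (a : ℤ) % M = a :=
    Int.emod_eq_of_lt (Int.natCast_nonneg a) (by rw [hM]; exact_mod_cast Nat.lt_succ_of_le ha)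
  rw [hcong, hval, hfin, haM]
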